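/- Let F₀ = x₀³ + a₀x₄x₀² + x₄²h₀, F₁ = x₁³ + a₁x₄x₁² + x₄²h₁, F₂ = x₂³ + a₂x₄x₂² + x₄²h₂, F₃ = x₀x₁x₂ + (1/3)x₄(a₀x₁x₂ + a₁x₀x₂ + a₂x₀x₁) + x₄²h₃, with hᵢ homogeneous linear in x₀,…,x₄ and aᵢ scalars, over a field of characteristic zero. Then in the polynomial F₀F₁F₂ − F₃³, the coefficient of every monomial divisible by x₀⁶ is zero. -/

import Mathlib

open MvPolynomial

/-- With `F₀ = x₀³ + a₀x₄x₀² + x₄²h₀`, `F₁ = x₁³ + a₁x₄x₁² + x₄²h₁`,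
`F₂ = x₂³ + a₂x₄x₂² + x₄²h₂`,
`F₃ = x₀x₁x₂ + (1/3)x₄(a₀x₁x₂ + a₁x₀x₂ + a₂x₀x₁) + x₄²h₃`, the `hᵢ` homogeneous linear and
`aᵢ` scalars, over a field of characteristic zero, every monomial divisible by `x₀⁶` has
zero coefficient in `F₀F₁F₂ − F₃³`. -/
theorem stmt_8 (k : Type*) [Field k] [CharZero k]
    (a₀ a₁ a₂ : k) (h : Fin 4 → MvPolynomial (Fin 5) k)
    (hh : ∀ i, (h i).IsHomogeneous 1)
    (F₀ F₁ F₂ F₃ : MvPolynomial (Fin 5) k)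
    (hF₀ : F₀ = X 0 ^ 3 + C a₀ * X 4 * X 0 ^ 2 + X 4 ^ 2 * h 0)
    (hF₁ : F₁ = X 1 ^ 3 + C a₁ * X 4 * X 1 ^ 2 + X 4 ^ 2 * h 1)
    (hF₂ : F₂ = X 2 ^ 3 + C a₂ * X 4 * X 2 ^ 2 + X 4 ^ 2 * h 2)
    (hF₃ : F₃ = X 0 * X 1 * X 2 +
      C (3⁻¹ : k) * X 4 * (C a₀ * X 1 * X 2 + C a₁ * X 0 * X 2 + C a₂ * X 0 * X 1) +
      X 4 ^ 2 * h 3) :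
    ∀ d : Fin 5 →₀ ℕ, 6 ≤ d 0 → coeff d (F₀ * F₁ * F₂ - F₃ ^ 3) = 0 := by
  intro d hd
  have e0 : degreeOf 0 (X 0 : MvPolynomial (Fin 5) k) ≤ 1 := by
    rw [degreeOf_X]; split <;> omega
  have e1 : degreeOf 0 (X 1 : MvPolynomial (Fin 5) k) = 0 := by
    rw [degreeOf_X, if_neg (by decide)]
  have e2 : degreeOf 0 (X 2 : MvPolynomial (Fin 5) k) = 0 := by
    rw [degreeOf_X, if_neg (by decide)]
  have e4 : degreeOf 0 (X 4 : MvPolynomial (Fin 5) k) = 0 := by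
    rw [degreeOf_X, if_neg (by decide)]
  have eC : ∀ c : k, degreeOf 0 (C c : MvPolynomial (Fin 5) k) = 0 := fun c => degreeOf_C c 0
  have hhd : ∀ i, degreeOf 0 (h i) ≤ 1 := fun i =>
    (degreeOf_le_totalDegree _ _).trans ((hh i).totalDegree_le)
  -- the common x₄² h i term
  have hx4sq : ∀ i : Fin 4, degreeOf 0 ((X 4 : MvPolynomial (Fin 5) k) ^ 2 * h i) ≤ 1 := by
    intro i
    have m1 := degreeOf_mul_le 0 ((X 4 : MvPolynomial (Fin 5) k) ^ 2) (h i)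
    have m2 := degreeOf_pow_le 0 (X 4 : MvPolynomial (Fin 5) k) 2
    have m3 := hhd i
    omega
  have h0 : degreeOf 0 F₀ ≤ 3 := by
    rw [hF₀]
    have s1 := degreeOf_add_le 0 (X 0 ^ 3 + C a₀ * X 4 * X 0 ^ 2) ((X 4 : MvPolynomial (Fin 5) k) ^ 2 * h 0)
    have s2 := degreeOf_add_le 0 ((X 0 : MvPolynomial (Fin 5) k) ^ 3) (C a₀ * X 4 * X 0 ^ 2)
    have m1 := degreeOf_pow_le 0 (X 0 : MvPolynomial (Fin 5) k) 3
    have m2 := degreeOf_mul_le 0 (C a₀ * X 4 : MvPolynomial (Fin 5) k) (X 0 ^ 2)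
    have m3 := degreeOf_mul_le 0 (C a₀ : MvPolynomial (Fin 5) k) (X 4)
    have m4 := degreeOf_pow_le 0 (X 0 : MvPolynomial (Fin 5) k) 2
    have m5 := hx4sq 0
    have := eC a₀
    omega
  have h1 : degreeOf 0 F₁ ≤ 1 := by
    rw [hF₁]
    have s1 := degreeOf_add_le 0 (X 1 ^ 3 + C a₁ * X 4 * X 1 ^ 2) ((X 4 : MvPolynomial (Fin 5) k) ^ 2 * h 1)
    have s2 := degreeOf_add_le 0 ((X 1 : MvPolynomial (Fin 5) k) ^ 3) (C a₁ * X 4 * X 1 ^ 2)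
    have m1 := degreeOf_pow_le 0 (X 1 : MvPolynomial (Fin 5) k) 3
    have m2 := degreeOf_mul_le 0 (C a₁ * X 4 : MvPolynomial (Fin 5) k) (X 1 ^ 2)
    have m3 := degreeOf_mul_le 0 (C a₁ : MvPolynomial (Fin 5) k) (X 4)
    have m4 := degreeOf_pow_le 0 (X 1 : MvPolynomial (Fin 5) k) 2
    have m5 := hx4sq 1
    have := eC a₁
    omega
  have h2 : degreeOf 0 F₂ ≤ 1 := by
    rw [hF₂]
    have s1 := degreeOf_add_le 0 (X 2 ^ 3 + C a₂ * X 4 * X 2 ^ 2) ((X 4 : MvPolynomial (Fin 5) k) ^ 2 * h 2)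
    have s2 := degreeOf_add_le 0 ((X 2 : MvPolynomial (Fin 5) k) ^ 3) (C a₂ * X 4 * X 2 ^ 2)
    have m1 := degreeOf_pow_le 0 (X 2 : MvPolynomial (Fin 5) k) 3
    have m2 := degreeOf_mul_le 0 (C a₂ * X 4 : MvPolynomial (Fin 5) k) (X 2 ^ 2)
    have m3 := degreeOf_mul_le 0 (C a₂ : MvPolynomial (Fin 5) k) (X 4)
    have m4 := degreeOf_pow_le 0 (X 2 : MvPolynomial (Fin 5) k) 2
    have m5 := hx4sq 2
    have := eC a₂
    omega
  have h3 : degreeOf 0 F₃ ≤ 1 := by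
    rw [hF₃]
    have s1 := degreeOf_add_le 0
      (X 0 * X 1 * X 2 + C (3⁻¹ : k) * X 4 * (C a₀ * X 1 * X 2 + C a₁ * X 0 * X 2 + C a₂ * X 0 * X 1))
      ((X 4 : MvPolynomial (Fin 5) k) ^ 2 * h 3)
    have s2 := degreeOf_add_le 0 ((X 0 : MvPolynomial (Fin 5) k) * X 1 * X 2)
      (C (3⁻¹ : k) * X 4 * (C a₀ * X 1 * X 2 + C a₁ * X 0 * X 2 + C a₂ * X 0 * X 1))
    have m1 := degreeOf_mul_le 0 ((X 0 : MvPolynomial (Fin 5) k) * X 1) (X 2)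
    have m2 := degreeOf_mul_le 0 (X 0 : MvPolynomial (Fin 5) k) (X 1)
    have m3 := degreeOf_mul_le 0 (C (3⁻¹ : k) * X 4 : MvPolynomial (Fin 5) k)
      (C a₀ * X 1 * X 2 + C a₁ * X 0 * X 2 + C a₂ * X 0 * X 1)
    have m4 := degreeOf_mul_le 0 (C (3⁻¹ : k) : MvPolynomial (Fin 5) k) (X 4)
    have s3 := degreeOf_add_le 0 ((C a₀ : MvPolynomial (Fin 5) k) * X 1 * X 2 + C a₁ * X 0 * X 2)
      (C a₂ * X 0 * X 1)
    have s4 := degreeOf_add_le 0 ((C a₀ : MvPolynomial (Fin 5) k) * X 1 * X 2) (C a₁ * X 0 * X 2)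
    have t1 := degreeOf_mul_le 0 ((C a₀ : MvPolynomial (Fin 5) k) * X 1) (X 2)
    have t2 := degreeOf_mul_le 0 (C a₀ : MvPolynomial (Fin 5) k) (X 1)
    have t3 := degreeOf_mul_le 0 ((C a₁ : MvPolynomial (Fin 5) k) * X 0) (X 2)
    have t4 := degreeOf_mul_le 0 (C a₁ : MvPolynomial (Fin 5) k) (X 0)
    have t5 := degreeOf_mul_le 0 ((C a₂ : MvPolynomial (Fin 5) k) * X 0) (X 1)
    have t6 := degreeOf_mul_le 0 (C a₂ : MvPolynomial (Fin 5) k) (X 0)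
    have m5 := hx4sq 3
    have := eC a₀; have := eC a₁; have := eC a₂; have := eC (3⁻¹ : k)
    omega
  have hprod : degreeOf 0 (F₀ * F₁ * F₂) ≤ 5 := by
    have p1 := degreeOf_mul_le 0 (F₀ * F₁) F₂
    have p2 := degreeOf_mul_le 0 F₀ F₁
    omega
  have hcube : degreeOf 0 (F₃ ^ 3) ≤ 3 := (degreeOf_pow_le _ _ _).trans (by omega)
  have key : degreeOf 0 (F₀ * F₁ * F₂ - F₃ ^ 3) < 6 := by
    have := degreeOf_add_le 0 (F₀ * F₁ * F₂) (-(F₃ ^ 3))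
    rw [sub_eq_add_neg]
    have hneg : degreeOf 0 (-(F₃ ^ 3)) = degreeOf 0 (F₃ ^ 3) := by
      simp [degreeOf, degrees_neg]
    omega
  rw [degreeOf_lt_iff (by norm_num)] at key
  by_contra hc
  exact absurd (key d (mem_support_iff.mpr hc)) (by omega)
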